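/- Let G be a directed acyclic graph on n vertices and let M be the n×n integer matrix with M[u,v] equal to the number of distinct directed paths from u to v (where the empty path counts, so M[u,u] ≥ 1). If an edge (x,y) not in G is inserted and the resulting graph G' is still acyclic, then the path-count matrix M' of G' satisfies M' = M + J·I, where J is the column vector J[z] = M[z,x] and I is the row vector I[z] = M[y,z]. -/

import Mathlib

section Aux

variable {α : Type*} {r : α → α → Prop}

private lemma chain_transGen {a b : α} {p : List α} (h : List.Chain r a p) (hb : b ∈ p) :
    Relation.TransGen r a b := by
  induction p generalizing a with
  | nil => simp at hb
  | cons c q ih =>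
    rcases List.chain_cons.1 h with ⟨hac, hq⟩
    rcases List.mem_cons.1 hb with rfl | hb
    · exact Relation.TransGen.single hac
    · exact Relation.TransGen.head hac (ih hq hb)

private lemma chain_nodup (hacyc : ∀ v, ¬ Relation.TransGen r v v) {a : α} {p : List α}
    (h : List.Chain r a p) : (a :: p).Nodup := by
  induction p generalizing a with
  | nil => simp
  | cons c q ih =>
    rcases List.chain_cons.1 h with ⟨hac, hq⟩
    refine List.nodup_cons.2 ⟨?_, ih hq⟩
    intro hmem
    rcases List.mem_cons.1 hmem with rfl | hmem
    · exact hacyc a (Relation.TransGen.single hac)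
    · exact hacyc a (Relation.TransGen.head hac (chain_transGen hq hmem))

private lemma split_unique {y : α} : ∀ {q q' r r' : List α}, y ∉ q → y ∉ q' →
    q ++ y :: r = q' ++ y :: r' → q = q' ∧ r = r' := by
  intro q
  induction q with
  | nil =>
    intro q' r r' _ hq' he
    cases q' with
    | nil => simpa using he
    | cons a q'' =>
      simp only [List.nil_append, List.cons_append, List.cons.injEq] at he
      obtain ⟨rfl, -⟩ := he
      exact absurd List.mem_cons_self hq'
  | cons a q₀ ih =>
    intro q' r r' hq hq' he
    cases q' with
    | nil =>
      simp only [List.cons_append, List.nil_append, List.cons.injEq] at he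
      obtain ⟨rfl, -⟩ := he
      exact absurd List.mem_cons_self hq
    | cons a' q₀' =>
      simp only [List.cons_append, List.cons.injEq] at he
      obtain ⟨rfl, he⟩ := he
      obtain ⟨rfl, rfl⟩ := ih (fun h => hq (List.mem_cons_of_mem _ h))
        (fun h => hq' (List.mem_cons_of_mem _ h)) he
      exact ⟨rfl, rfl⟩

private lemma chain_finite {n : ℕ} {r : Fin n → Fin n → Prop}
    (hacyc : ∀ v, ¬ Relation.TransGen r v v) (a : Fin n) :
    {p : List (Fin n) | List.Chain r a p}.Finite := by
  apply (List.finite_length_le (Fin n) n).subset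
  intro p hp
  have hnd := chain_nodup hacyc hp
  have hle := hnd.length_le_card
  simp only [List.length_cons, Fintype.card_fin] at hle
  simp only [Set.mem_setOf_eq]
  omega

private lemma getLast_eq_iff {l : List α} (h : l ≠ []) {b : α} :
    l.getLast h = b ↔ l.getLast? = some b := by
  rw [List.getLast?_eq_getLast_of_ne_nil h]
  simp

end Aux

/-- Number of directed paths (walks) from `u` to `v`: a path is encoded by the list `p`
of vertices following `u`; the empty path from `u` to `u` counts. In a DAG this set is
finite and every walk is a path. -/
noncomputable def pathCount (n : ℕ) (G : Fin n → Fin n → Prop) (u v : Fin n) : ℕ :=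
  Set.ncard {p : List (Fin n) |
    List.Chain G u p ∧ (u :: p).getLast (List.cons_ne_nil u p) = v}

private lemma pathCount_eq (n : ℕ) (G : Fin n → Fin n → Prop) (u v : Fin n) :
    pathCount n G u v
      = Set.ncard {p : List (Fin n) | List.Chain G u p ∧ (u :: p).getLast? = some v} := by
  unfold pathCount
  congr 1
  ext p
  simp only [Set.mem_setOf_eq]
  exact and_congr_right fun _ => getLast_eq_iff _

/-- Inserting an edge `(x,y)` into a DAG (keeping it acyclic) updates the path-count
matrix by the outer product: `M'[u,v] = M[u,v] + M[u,x]·M[y,v]`. -/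
theorem stmt12 (n : ℕ) (G G' : Fin n → Fin n → Prop) (x y : Fin n)
    (hacyc : ∀ v, ¬ Relation.TransGen G v v)
    (hxy : ¬ G x y)
    (hG' : ∀ u v, G' u v ↔ G u v ∨ (u = x ∧ v = y))
    (hacyc' : ∀ v, ¬ Relation.TransGen G' v v) :
    ∀ u v, pathCount n G' u v
      = pathCount n G u v + pathCount n G u x * pathCount n G y v := by
  have hGsub : ∀ a b, G a b → G' a b := fun a b h => (hG' a b).2 (Or.inl h)
  -- chains in G' avoiding an adjacent (x,y) pair are chains in G
  have noedge : ∀ (p : List (Fin n)) (a : Fin n), List.Chain G' a p →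
      (∀ q r, p = q ++ y :: r → (a :: q).getLast? ≠ some x) →
      List.Chain G a p := by
    intro p
    induction p with
    | nil => intro a _ _; exact List.Chain.nil
    | cons c p' ih =>
      intro a h hno
      rcases List.chain_cons.1 h with ⟨hac, hcp⟩
      refine List.chain_cons.2 ⟨?_, ih c hcp ?_⟩
      · rcases (hG' a c).1 hac with h' | ⟨rfl, rfl⟩
        · exact h'
        · exact (hno [] p' rfl (by simp)).elim
      · intro q r hqr hlast
        refine hno (c :: q) r (by simp [hqr]) ?_
        rw [List.getLast?_cons_cons]
        exact hlast
  intro u v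
  set S' : Set (List (Fin n)) :=
    {p | List.Chain G' u p ∧ (u :: p).getLast? = some v} with hS'
  set S : Set (List (Fin n)) :=
    {p | List.Chain G u p ∧ (u :: p).getLast? = some v} with hS
  set Q : Set (List (Fin n)) :=
    {q | List.Chain G u q ∧ (u :: q).getLast? = some x} with hQ
  set R : Set (List (Fin n)) :=
    {r | List.Chain G y r ∧ (y :: r).getLast? = some v} with hR
  set f : List (Fin n) × List (Fin n) → List (Fin n) := fun z => z.1 ++ y :: z.2 with hf
  -- glued chains are chains in G'
  have hglue : ∀ q r, q ∈ Q → r ∈ R → f (q, r) ∈ S' := by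
    rintro q r ⟨hcq, hqx⟩ ⟨hcr, hrv⟩
    constructor
    · have h1 : List.Chain' G' (u :: q) := List.IsChain.imp hGsub hcq
      have h2 : List.Chain' G' (y :: r) := List.IsChain.imp hGsub hcr
      have h3 : List.Chain' G' ((u :: q) ++ (y :: r)) := by
        refine List.isChain_append.2 ?_
        refine ⟨h1, h2, ?_⟩
        intro a ha b hb
        rw [hqx] at ha
        simp only [List.head?_cons, Option.mem_def, Option.some.injEq] at ha hb
        subst ha; subst hb
        exact (hG' x y).2 (Or.inr ⟨rfl, rfl⟩)
      rw [List.cons_append] at h3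
      exact h3
    · show (u :: (q ++ y :: r)).getLast? = some v
      rw [show u :: (q ++ y :: r) = (u :: q) ++ y :: r from by simp,
        List.getLast?_append_cons]
      exact hrv
  -- members of the glued image have no duplicate vertices
  have hglueNodup : ∀ q r, q ∈ Q → r ∈ R → (u :: (q ++ y :: r)).Nodup := by
    intro q r hq hr
    exact chain_nodup hacyc' (hglue q r hq hr).1
  have hynq : ∀ q r, q ∈ Q → r ∈ R → y ∉ q := by
    intro q r hq hr hy
    have hnd := (hglueNodup q r hq hr).of_cons
    exact (List.disjoint_of_nodup_append hnd) hy List.mem_cons_self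
  -- the set decomposition
  have hset : S' = S ∪ f '' (Q ×ˢ R) := by
    ext p
    constructor
    · rintro ⟨hc, hl⟩
      by_cases he : ∃ q r, p = q ++ y :: r ∧ (u :: q).getLast? = some x
      · obtain ⟨q, r, rfl, hqx⟩ := he
        right
        have hnd : (u :: (q ++ y :: r)).Nodup := chain_nodup hacyc' hc
        have hynq' : y ∉ q := by
          intro hy
          exact (List.disjoint_of_nodup_append hnd.of_cons) hy List.mem_cons_self
        have hynr : y ∉ r := by
          have : (y :: r).Nodup := hnd.of_cons.of_append_right
          exact (List.nodup_cons.1 this).1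
        obtain ⟨hc1, hc2⟩ := List.isChain_cons_split.1 hc
        have hc1' : List.Chain' G' ((u :: q) ++ [y]) := by
          rw [List.cons_append]; exact hc1
        have hcq' : List.Chain G' u q := hc1'.left_of_append
        have hcq : List.Chain G u q := by
          refine noedge q u hcq' ?_
          intro q₁ r₁ hq₁ _
          exact hynq' (hq₁ ▸ List.mem_append_right q₁ List.mem_cons_self)
        have hcr : List.Chain G y r := by
          refine noedge r y hc2 ?_
          intro r₁ r₂ hr₁ _
          exact hynr (hr₁ ▸ List.mem_append_right r₁ List.mem_cons_self)
        have hrv : (y :: r).getLast? = some v := by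
          rwa [show u :: (q ++ y :: r) = (u :: q) ++ y :: r from by simp,
            List.getLast?_append_cons] at hl
        exact ⟨(q, r), ⟨⟨hcq, hqx⟩, ⟨hcr, hrv⟩⟩, rfl⟩
      · left
        refine ⟨noedge p u hc ?_, hl⟩
        intro q r hqr hlast
        exact he ⟨q, r, hqr, hlast⟩
    · rintro (⟨hc, hl⟩ | ⟨⟨q, r⟩, ⟨hq, hr⟩, rfl⟩)
      · exact ⟨List.IsChain.imp hGsub hc, hl⟩
      · exact hglue q r hq hr
  -- disjointness
  have hdisj : Disjoint S (f '' (Q ×ˢ R)) := by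
    rw [Set.disjoint_left]
    rintro p ⟨hc, -⟩ ⟨⟨q, r⟩, ⟨⟨hcq, hqx⟩, hr⟩, rfl⟩
    obtain ⟨hc1, -⟩ := List.isChain_cons_split.1 hc
    have hc1' : List.Chain' G ((u :: q) ++ [y]) := by
      rw [List.cons_append]; exact hc1
    obtain ⟨-, -, hjunc⟩ := List.isChain_append.1 hc1'
    exact hxy (hjunc x (by rw [hqx]; rfl) y rfl)
  -- injectivity
  have hinj : Set.InjOn f (Q ×ˢ R) := by
    rintro ⟨q, r⟩ ⟨hq, hr⟩ ⟨q', r'⟩ ⟨hq', hr'⟩ he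
    have h1 : y ∉ q := hynq q r hq hr
    have h2 : y ∉ q' := hynq q' r' hq' hr'
    obtain ⟨rfl, rfl⟩ := split_unique h1 h2 he
    rfl
  -- finiteness
  have hSfin : S.Finite := (chain_finite hacyc u).subset fun p hp => hp.1
  have hQfin : Q.Finite := (chain_finite hacyc u).subset fun p hp => hp.1
  have hRfin : R.Finite := (chain_finite hacyc y).subset fun p hp => hp.1
  have hPfin : (Q ×ˢ R).Finite := hQfin.prod hRfin
  have hIfin : (f '' (Q ×ˢ R)).Finite := hPfin.image f
  -- counting
  rw [pathCount_eq, pathCount_eq, pathCount_eq, pathCount_eq]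
  show S'.ncard = S.ncard + Q.ncard * R.ncard
  rw [hset, Set.ncard_union_eq hdisj hSfin hIfin, Set.ncard_image_of_injOn hinj]
  congr 1
  have := Nat.card_congr (Equiv.Set.prod Q R)
  simpa [Nat.card_prod, Nat.card_coe_set_eq] using this
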